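/- Let C be a small category. Then the Karoubi envelope Karoubi C is equivalent to the full subcategory of the presheaf category Cᵒᵖ ⥤ Type consisting of the tiny presheaves, i.e. those P for which the functor coyoneda.obj (Opposite.op P) : (Cᵒᵖ ⥤ Type) ⥤ Type preserves all small colimits. In other words, the Karoubi envelope is the Cauchy completion. -/

import Mathlib

open CategoryTheory CategoryTheory.Limits CategoryTheory.Idempotents Opposite

namespace KarTiny

section Retract

universe w w' v₁ u₁ v₂ u₂

variable {D : Type u₁} [Category.{v₁} D] {E : Type u₂} [Category.{v₂} E]

/-- A retract (in the functor category) of a colimit-preserving functor preserves colimits. -/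
lemma preservesColimitsOfSize_of_retract (F G : D ⥤ E) (i : G ⟶ F) (r : F ⟶ G)
    (hir : i ≫ r = 𝟙 G) [PreservesColimitsOfSize.{w, w'} F] :
    PreservesColimitsOfSize.{w, w'} G := by
  have hcomp : ∀ X : D, i.app X ≫ r.app X = 𝟙 (G.obj X) := fun X =>
    congrArg (fun t => NatTrans.app t X) hir
  constructor
  intro J _
  constructor
  intro K
  constructor
  intro c hc
  have hF : IsColimit (F.mapCocone c) := isColimitOfPreserves F hc
  constructor
  refine IsColimit.mk (fun s => i.app c.pt ≫ hF.desc
    ((Cocone.precompose (Functor.whiskerLeft K r)).obj s)) ?_ ?_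
  · intro s j
    have h1 : G.map (c.ι.app j) ≫ i.app c.pt = i.app (K.obj j) ≫ F.map (c.ι.app j) :=
      i.naturality (c.ι.app j)
    have h2 := hF.fac ((Cocone.precompose (Functor.whiskerLeft K r)).obj s) j
    dsimp at h2 ⊢
    rw [← Category.assoc, h1, Category.assoc, h2, ← Category.assoc, hcomp,
      Category.id_comp]
  · intro s m hm
    have key : r.app c.pt ≫ m = hF.desc ((Cocone.precompose (Functor.whiskerLeft K r)).obj s) := by
      apply hF.uniq ((Cocone.precompose (Functor.whiskerLeft K r)).obj s)
      intro j
      have h1 : F.map (c.ι.app j) ≫ r.app c.pt = r.app (K.obj j) ≫ G.map (c.ι.app j) :=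
        r.naturality (c.ι.app j)
      have hmj := hm j
      dsimp at hmj ⊢
      rw [← Category.assoc, h1, Category.assoc, hmj]
    show m = i.app c.pt ≫ hF.desc ((Cocone.precompose (Functor.whiskerLeft K r)).obj s)
    rw [← key, ← Category.assoc, hcomp, Category.id_comp]

end Retract

variable {C : Type} [SmallCategory C]

/-- The extension of the Yoneda embedding to the Karoubi envelope, defined concretely:
`(X, p)` is sent to the presheaf of maps into `X` fixed by `p`. -/
@[simps]
def K : Karoubi C ⥤ (Cᵒᵖ ⥤ Type) where
  obj P :=
    { obj := fun Y => { f : Y.unop ⟶ P.X // f ≫ P.p = f }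
      map := fun g => TypeCat.ofHom fun f => ⟨g.unop ≫ f.1, by rw [Category.assoc, f.2]⟩
      map_id := fun Y => by ext f; exact Category.id_comp f.1
      map_comp := fun g h => by ext f; exact Category.assoc _ _ _ }
  map {P Q} h :=
    { app := fun Y => TypeCat.ofHom fun f => ⟨f.1 ≫ h.f, by rw [Category.assoc, Karoubi.comp_p]⟩
      naturality := fun Y Z g => by ext f; exact Category.assoc _ _ _ }
  map_id P := by
    ext Y f
    exact f.2
  map_comp f g := by
    ext Y x
    exact (Category.assoc _ _ _).symm

/-- `K` is fully faithful. -/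
def KFF : (K (C := C)).FullyFaithful where
  preimage {P Q} α := by
    refine ⟨(α.app (op P.X) ⟨P.p, P.idem⟩).1, ?_⟩
    have hq := (α.app (op P.X) ⟨P.p, P.idem⟩).2
    have hp : P.p ≫ (α.app (op P.X) ⟨P.p, P.idem⟩).1 = (α.app (op P.X) ⟨P.p, P.idem⟩).1 := by
      have := NatTrans.naturality_apply α (P.p.op : op P.X ⟶ op P.X)
        (⟨P.p, P.idem⟩ : (K.obj P).obj (op P.X))
      have h2 : (K.obj P).map P.p.op ⟨P.p, P.idem⟩ = ⟨P.p, P.idem⟩ :=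
        Subtype.ext P.idem
      rw [h2] at this
      exact (congrArg Subtype.val this).symm
    rw [hq, hp]
  map_preimage {P Q} α := by
    ext Y f
    have := NatTrans.naturality_apply α (f.1.op : op P.X ⟶ Y)
      (⟨P.p, P.idem⟩ : (K.obj P).obj (op P.X))
    have h2 : (K.obj P).map f.1.op ⟨P.p, P.idem⟩ = f := Subtype.ext f.2
    rw [h2] at this
    exact Subtype.ext (congrArg Subtype.val this.symm)
  preimage_map {P Q} h := by
    apply Karoubi.Hom.ext
    exact Karoubi.p_comp h

/-- The inclusion of `K.obj P` into the representable presheaf on `P.X`. -/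
@[simps]
def incl (P : Karoubi C) : K.obj P ⟶ yoneda.obj P.X where
  app Y := TypeCat.ofHom fun f => f.1
  naturality Y Z g := rfl

/-- The projection from the representable presheaf on `P.X` onto `K.obj P`. -/
@[simps]
def projK (P : Karoubi C) : yoneda.obj P.X ⟶ K.obj P where
  app Y := TypeCat.ofHom fun f => ⟨f ≫ P.p, by rw [Category.assoc, P.idem]⟩
  naturality Y Z g := by ext f; exact Subtype.ext (Category.assoc g.unop f P.p)

lemma incl_projK (P : Karoubi C) : incl P ≫ projK P = 𝟙 (K.obj P) := by
  ext Y f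
  exact Subtype.ext f.2

/-- The iso between `Hom(yoneda X, -)` and evaluation at `X`. -/
@[simps]
def coyonedaYonedaIso (X : C) :
    (coyoneda.obj (op (yoneda.obj X)) : (Cᵒᵖ ⥤ Type) ⥤ Type) ≅
      (evaluation Cᵒᵖ Type).obj (op X) where
  hom := { app := fun P => TypeCat.ofHom fun f => yonedaEquiv f
           naturality := fun P Q η => by ext f; exact yonedaEquiv_comp f η }
  inv := { app := fun P => TypeCat.ofHom fun x => yonedaEquiv.symm x
           naturality := fun P Q η => by
            ext x
            apply yonedaEquiv.injective
            simp [yonedaEquiv_comp] }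

lemma K_obj_tiny (P : Karoubi C) :
    PreservesColimits (coyoneda.obj (op (K.obj P)) : (Cᵒᵖ ⥤ Type) ⥤ Type) := by
  have : PreservesColimits (coyoneda.obj (op (yoneda.obj P.X)) : (Cᵒᵖ ⥤ Type) ⥤ Type) :=
    preservesColimits_of_natIso (coyonedaYonedaIso P.X).symm
  exact preservesColimitsOfSize_of_retract _ _
    (coyoneda.map (projK P).op) (coyoneda.map (incl P).op)
    (by rw [← coyoneda.map_comp, ← op_comp, incl_projK]; rfl)

/-- `K`, corestricted to the tiny presheaves. -/
def K' : Karoubi C ⥤ ObjectProperty.FullSubcategory (fun P : Cᵒᵖ ⥤ Type =>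
    Nonempty (PreservesColimits (coyoneda.obj (op P) : (Cᵒᵖ ⥤ Type) ⥤ Type))) :=
  ObjectProperty.lift _ K (fun P => ⟨K_obj_tiny P⟩)

lemma essSurj_aux (P : Cᵒᵖ ⥤ Type)
    (h : PreservesColimits (coyoneda.obj (op P) : (Cᵒᵖ ⥤ Type) ⥤ Type)) :
    ∃ Q : Karoubi C, Nonempty (K.obj Q ≅ P) := by
  have hc : IsColimit ((coyoneda.obj (op P)).mapCocone (Presheaf.tautologicalCocone P)) :=
    isColimitOfPreserves _ (Presheaf.isColimitTautologicalCocone P)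
  obtain ⟨j, s, hs⟩ : ∃ (j : CostructuredArrow yoneda P) (s : P ⟶ yoneda.obj j.left), s ≫ j.hom = 𝟙 P := by
    obtain ⟨j, s, hs⟩ := Types.jointly_surjective_of_isColimit hc (𝟙 P)
    exact ⟨j, s, hs⟩
  -- `j : CostructuredArrow yoneda P`, `s : P ⟶ yoneda.obj j.left`, `s ≫ j.hom = 𝟙 P`
  let r : yoneda.obj j.left ⟶ P := j.hom
  have hsr : s ≫ r = 𝟙 P := hs
  have hidem : (r ≫ s) ≫ (r ≫ s) = r ≫ s := by
    rw [Category.assoc, ← Category.assoc s r, hsr, Category.id_comp]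
  let p : j.left ⟶ j.left := Yoneda.fullyFaithful.preimage (r ≫ s)
  have hyp : yoneda.map p = r ≫ s := Yoneda.fullyFaithful.map_preimage _
  have hpidem : p ≫ p = p := by
    apply Yoneda.fullyFaithful.map_injective
    rw [Functor.map_comp, hyp, hidem]
  set Q : Karoubi C := ⟨j.left, p, hpidem⟩ with hQ
  have h1 : projK Q ≫ incl Q = yoneda.map p := by
    ext Y f
    rfl
  refine ⟨Q, ⟨⟨incl Q ≫ r, s ≫ projK Q, ?_, ?_⟩⟩⟩
  · calc (incl Q ≫ r) ≫ s ≫ projK Q = incl Q ≫ (r ≫ s) ≫ projK Q := by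
          simp only [Category.assoc]
      _ = incl Q ≫ (projK Q ≫ incl Q) ≫ projK Q := by rw [h1, hyp]
      _ = (incl Q ≫ projK Q) ≫ incl Q ≫ projK Q := by simp only [Category.assoc]
      _ = 𝟙 (K.obj Q) := by rw [incl_projK, Category.id_comp]
  · calc (s ≫ projK Q) ≫ incl Q ≫ r = s ≫ (projK Q ≫ incl Q) ≫ r := by
          simp only [Category.assoc]
      _ = s ≫ (r ≫ s) ≫ r := by rw [h1, hyp]
      _ = (s ≫ r) ≫ s ≫ r := by simp only [Category.assoc]
      _ = 𝟙 P := by rw [hsr, Category.id_comp]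

end KarTiny

/-- The Karoubi envelope of a small category is its Cauchy completion: it is equivalent to
the full subcategory of tiny presheaves, i.e. presheaves `P` such that `Hom(P, −)`
preserves all small colimits. -/
theorem karoubi_equiv_tiny_presheaves {C : Type} [SmallCategory C] :
    Nonempty (Karoubi C ≌
      ObjectProperty.FullSubcategory (fun P : Cᵒᵖ ⥤ Type =>
        Nonempty (PreservesColimits (coyoneda.obj (Opposite.op P) :
          (Cᵒᵖ ⥤ Type) ⥤ Type)))) := by
  have : (KarTiny.K (C := C)).Full := KarTiny.KFF.full
  have : (KarTiny.K (C := C)).Faithful := KarTiny.KFF.faithful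
  have : KarTiny.K' (C := C) |>.Full := by unfold KarTiny.K'; infer_instance
  have : KarTiny.K' (C := C) |>.Faithful := by unfold KarTiny.K'; infer_instance
  have : KarTiny.K' (C := C) |>.EssSurj := by
    constructor
    rintro ⟨P, ⟨hP⟩⟩
    obtain ⟨Q, ⟨e⟩⟩ := KarTiny.essSurj_aux P hP
    exact ⟨Q, ⟨(ObjectProperty.ι _).preimageIso e⟩⟩
  have : KarTiny.K' (C := C) |>.IsEquivalence := { }
  exact ⟨KarTiny.K'.asEquivalence⟩
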